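/- Let Z be a zero forcing set of A ∈ F^{n×n} with terminal set T and core matrix B = (RA)_{T,Z} where R(b) = b − A·Forcing(A,Z,b). Then Ax = b has a solution if and only if By = (Rb)_T has a solution y ∈ F^Z; moreover, given such a y, the vector x = x' + Forcing(A,Z,b − Ax'), where x' has x'_Z = y and zeros elsewhere, satisfies Ax = b. -/

import Mathlib

open Matrix

section ZeroForcing

variable {V : Type*}

/-- The blue-coloring closure of the zero forcing process on a directed graph with
edge relation `E`, starting from the initially blue set `Z`:  a blue vertex `u` all of
whose out-neighbors except `v` are already blue forces `v` to become blue. -/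
inductive Blue (E : V → V → Prop) (Z : Set V) : V → Prop
  | init {v : V} : v ∈ Z → Blue E Z v
  | force {u v : V} : Blue E Z u → E u v →
      (∀ w, E u w → w ≠ v → Blue E Z w) → Blue E Z v

/-- `Z` is a zero forcing set if the forcing process colors every vertex blue. -/
def IsZeroForcingSet (E : V → V → Prop) (Z : Set V) : Prop := ∀ v, Blue E Z v

end ZeroForcing

section ForcingAlg

variable {F : Type*} [Field F] {n : ℕ}

/-- The off-diagonal adjacency pattern of a matrix: `u → v` iff `u ≠ v` and `A u v ≠ 0`. -/
def adjOf (A : Matrix (Fin n) (Fin n) F) (u v : Fin n) : Prop := u ≠ v ∧ A u v ≠ 0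

/-- A chronological list of forces for the zero forcing set `Z` of `A`:  `π` lists the
vertices outside `Z` in the order they are forced, and `par u` is the forcing parent of
`u` (the vertex that forces `u`). -/
structure ForcingOrder (A : Matrix (Fin n) (Fin n) F) (Z : Finset (Fin n)) where
  π : List (Fin n)
  par : Fin n → Fin n
  nodup : π.Nodup
  mem_iff : ∀ v, v ∈ π ↔ v ∉ Z
  par_ne_self : ∀ u ∈ π, par u ≠ u
  par_edge : ∀ u ∈ π, A (par u) u ≠ 0
  par_blue : ∀ u ∈ π, par u ∈ Z ∨ (par u ∈ π ∧ π.idxOf (par u) < π.idxOf u)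
  others_blue : ∀ u ∈ π, ∀ w, w ≠ par u → w ≠ u → A (par u) w ≠ 0 →
      (w ∈ Z ∨ (w ∈ π ∧ π.idxOf w < π.idxOf u))
  par_inj : ∀ u ∈ π, ∀ v ∈ π, par u = par v → u = v

/-- One step of the forcing algorithm: `x_u ← (b_{u↑} − A_{u↑,*} x) / A_{u↑,u}`. -/
def forcingStep (A : Matrix (Fin n) (Fin n) F) (par : Fin n → Fin n)
    (b : Fin n → F) (x : Fin n → F) (u : Fin n) : Fin n → F :=
  Function.update x u ((b (par u) - A (par u) ⬝ᵥ x) / A (par u) u)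

/-- The forcing algorithm `Forcing(A, Z, b)`: starting from `x = 0`, iterate the forcing
update over the vertices outside `Z` in forcing order. -/
def Forcing (A : Matrix (Fin n) (Fin n) F) {Z : Finset (Fin n)}
    (fo : ForcingOrder A Z) (b : Fin n → F) : Fin n → F :=
  fo.π.foldl (forcingStep A fo.par b) 0

/-- The map `R(b) = b − A · Forcing(A, Z, b)`. -/
def Rmap (A : Matrix (Fin n) (Fin n) F) {Z : Finset (Fin n)}
    (fo : ForcingOrder A Z) (b : Fin n → F) : Fin n → F :=
  b - A.mulVec (Forcing A fo b)

/-- A vertex is a terminal if it has no forcing child. -/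
def IsTerminal {A : Matrix (Fin n) (Fin n) F} {Z : Finset (Fin n)}
    (fo : ForcingOrder A Z) (v : Fin n) : Prop :=
  ∀ u ∈ fo.π, fo.par u ≠ v

instance {A : Matrix (Fin n) (Fin n) F} {Z : Finset (Fin n)} (fo : ForcingOrder A Z) :
    DecidablePred (IsTerminal fo) := fun v =>
  decidable_of_iff (∀ u ∈ fo.π, fo.par u ≠ v) Iff.rfl

/-- The core matrix `B = (R A)_{T,Z}`: its column indexed by `z ∈ Z` is `(R a_z)_T`,
where `a_z` is the `z`-th column of `A` and `T` is the terminal set. -/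
def coreMatrix (A : Matrix (Fin n) (Fin n) F) {Z : Finset (Fin n)}
    (fo : ForcingOrder A Z) :
    Matrix {v // IsTerminal fo v} {v // v ∈ Z} F :=
  Matrix.of fun t z => Rmap A fo (fun i => A i z.1) t.1

end ForcingAlg

section Aux

variable {F : Type*} [Field F] {n : ℕ} (A : Matrix (Fin n) (Fin n) F)
  {Z : Finset (Fin n)}

lemma foldl_untouched (par : Fin n → Fin n) (c : Fin n → F) :
    ∀ (l : List (Fin n)) (x : Fin n → F) (v : Fin n), v ∉ l →
      l.foldl (forcingStep A par c) x v = x v := by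
  intro l
  induction l with
  | nil => intro x v _; rfl
  | cons u l ih =>
    intro x v hv
    simp only [List.foldl_cons]
    rw [ih _ v (fun h => hv (List.mem_cons_of_mem _ h))]
    refine Function.update_of_ne (fun h => ?_) _ _
    exact hv (h ▸ List.mem_cons_self)

lemma foldl_step_add (par : Fin n → Fin n) (c₁ c₂ : Fin n → F) :
    ∀ (l : List (Fin n)) (x₁ x₂ : Fin n → F),
      l.foldl (forcingStep A par (c₁ + c₂)) (x₁ + x₂)
        = l.foldl (forcingStep A par c₁) x₁ + l.foldl (forcingStep A par c₂) x₂ := by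
  intro l
  induction l with
  | nil => intro x₁ x₂; rfl
  | cons u l ih =>
    intro x₁ x₂
    simp only [List.foldl_cons]
    rw [show forcingStep A par (c₁ + c₂) (x₁ + x₂) u
        = forcingStep A par c₁ x₁ u + forcingStep A par c₂ x₂ u from ?_, ih]
    funext w
    by_cases hw : w = u
    · subst hw
      simp only [forcingStep, Function.update_self, Pi.add_apply, Function.update_self,
        dotProduct_add]
      ring
    · simp [forcingStep, Function.update_of_ne hw]

lemma foldl_step_smul (par : Fin n → Fin n) (k : F) (c : Fin n → F) :
    ∀ (l : List (Fin n)) (x : Fin n → F),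
      l.foldl (forcingStep A par (k • c)) (k • x)
        = k • l.foldl (forcingStep A par c) x := by
  intro l
  induction l with
  | nil => intro x; rfl
  | cons u l ih =>
    intro x
    simp only [List.foldl_cons]
    rw [show forcingStep A par (k • c) (k • x) u
        = k • forcingStep A par c x u from ?_, ih]
    funext w
    by_cases hw : w = u
    · subst hw
      simp only [forcingStep, Function.update_self, Pi.smul_apply, smul_eq_mul,
        dotProduct_smul]
      ring
    · simp [forcingStep, Function.update_of_ne hw]

lemma Forcing_add (fo : ForcingOrder A Z) (c₁ c₂ : Fin n → F) :
    Forcing A fo (c₁ + c₂) = Forcing A fo c₁ + Forcing A fo c₂ := by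
  have := foldl_step_add A fo.par c₁ c₂ fo.π 0 0
  simpa [Forcing] using this

lemma Forcing_smul (fo : ForcingOrder A Z) (k : F) (c : Fin n → F) :
    Forcing A fo (k • c) = k • Forcing A fo c := by
  have := foldl_step_smul A fo.par k c fo.π 0
  simpa [Forcing] using this

/-- `Rmap` as a linear map. -/
def RmapL (fo : ForcingOrder A Z) : (Fin n → F) →ₗ[F] (Fin n → F) where
  toFun := Rmap A fo
  map_add' c₁ c₂ := by
    simp only [Rmap, Forcing_add, Matrix.mulVec_add]
    abel
  map_smul' k c := by
    simp only [Rmap, Forcing_smul, Matrix.mulVec_smul, RingHom.id_apply, smul_sub]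

lemma tail_coef_zero (fo : ForcingOrder A Z) {s t : List (Fin n)} {u : Fin n}
    (h : fo.π = s ++ u :: t) {w : Fin n} (hw : w ∈ t) : A (fo.par u) w = 0 := by
  by_contra hAw
  have hu : u ∈ fo.π := by rw [h]; exact List.mem_append_right s (List.mem_cons_self)
  have hwπ : w ∈ fo.π := by rw [h]; exact List.mem_append_right s (List.mem_cons_of_mem u hw)
  have hnd := fo.nodup
  rw [h] at hnd
  have hdisj := List.disjoint_of_nodup_append hnd
  have hus : u ∉ s := fun hh => hdisj hh (List.mem_cons_self)
  have hws : w ∉ s := fun hh => hdisj hh (List.mem_cons_of_mem u hw)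
  have hut : u ∉ t := by
    have := hnd.of_append_right
    exact (List.nodup_cons.mp this).1
  have hwu : w ≠ u := fun hh => hut (hh ▸ hw)
  have hiu : fo.π.idxOf u = s.length := by
    rw [h, List.idxOf_append_of_notMem hus, List.idxOf_cons_self]
    simp
  have hiw : s.length < fo.π.idxOf w := by
    rw [h, List.idxOf_append_of_notMem hws, List.idxOf_cons_ne _ (Ne.symm hwu)]
    omega
  have hwZ : w ∉ Z := (fo.mem_iff w).1 hwπ
  have key : w ∈ Z ∨ (w ∈ fo.π ∧ fo.π.idxOf w < fo.π.idxOf u) := by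
    by_cases hwp : w = fo.par u
    · rcases fo.par_blue u hu with h1 | h1
      · exact Or.inl (hwp ▸ h1)
      · exact Or.inr (hwp ▸ h1)
    · exact fo.others_blue u hu w hwp hwu hAw
  rcases key with h1 | h1
  · exact hwZ h1
  · omega

lemma rmap_par_eq_zero (fo : ForcingOrder A Z) (c : Fin n → F) {u : Fin n}
    (hu : u ∈ fo.π) : Rmap A fo c (fo.par u) = 0 := by
  obtain ⟨s, t, h⟩ := List.append_of_mem hu
  set p := fo.par u with hp
  have hpu : A p u ≠ 0 := fo.par_edge u hu
  set x₀ : Fin n → F := s.foldl (forcingStep A fo.par c) 0 with hx₀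
  set x₁ : Fin n → F := forcingStep A fo.par c x₀ u with hx₁
  have hforc : Forcing A fo c = t.foldl (forcingStep A fo.par c) x₁ := by
    rw [Forcing, h, List.foldl_append, List.foldl_cons]
  have hus : u ∉ s := by
    have hnd := fo.nodup; rw [h] at hnd
    exact fun hh => List.disjoint_of_nodup_append hnd hh (List.mem_cons_self)
  have hx₀u : x₀ u = 0 := foldl_untouched A fo.par c s 0 u hus
  have h1 : A p ⬝ᵥ (t.foldl (forcingStep A fo.par c) x₁) = A p ⬝ᵥ x₁ := by
    unfold dotProduct
    apply Finset.sum_congr rfl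
    intro w _
    by_cases hAw : A p w = 0
    · simp [hAw]
    · congr 1
      by_cases hwt : w ∈ t
      · exact absurd (tail_coef_zero A fo h hwt) hAw
      · exact foldl_untouched A fo.par c t x₁ w hwt
  have h2 : A p ⬝ᵥ x₁ - A p ⬝ᵥ x₀ = c p - A p ⬝ᵥ x₀ := by
    have hsum : A p ⬝ᵥ x₁ - A p ⬝ᵥ x₀ = ∑ w, (A p w * x₁ w - A p w * x₀ w) := by
      rw [Finset.sum_sub_distrib]; rfl
    rw [hsum, Finset.sum_eq_single u]
    · rw [hx₁]
      simp only [forcingStep, Function.update_self, hx₀u, mul_zero, sub_zero, ← hp]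
      rw [mul_div_cancel₀ _ hpu]
    · intro w _ hwu
      rw [hx₁]
      simp only [forcingStep, Function.update_of_ne hwu, sub_self]
    · intro hh; exact absurd (Finset.mem_univ u) hh
  have key : A.mulVec (Forcing A fo c) p = c p := by
    have hh : A.mulVec (Forcing A fo c) p
        = A p ⬝ᵥ (t.foldl (forcingStep A fo.par c) x₁) := by
      rw [hforc]; rfl
    rw [hh, h1]
    linear_combination h2
  simp [Rmap, key]

lemma forcing_fix (fo : ForcingOrder A Z) (x'' : Fin n → F)
    (hx : ∀ v, v ∉ fo.π → x'' v = 0) :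
    Forcing A fo (A.mulVec x'') = x'' := by
  set c : Fin n → F := A.mulVec x'' with hc
  suffices h : ∀ (t s : List (Fin n)), fo.π = s ++ t →
      (∀ w, s.foldl (forcingStep A fo.par c) 0 w = if w ∈ s then x'' w else 0) →
      (∀ w, fo.π.foldl (forcingStep A fo.par c) 0 w
        = if w ∈ fo.π then x'' w else 0) by
    funext w
    have := h fo.π [] rfl (by intro w; simp) w
    rw [Forcing, this]
    by_cases hwπ : w ∈ fo.π
    · simp [hwπ]
    · simp [hwπ, hx w hwπ]
  intro t
  induction t with
  | nil =>
    intro s hs hinv w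
    have : fo.π = s := by simpa using hs
    rw [this]; exact hinv w
  | cons u t ih =>
    intro s hs hinv
    apply ih (s ++ [u]) (by rw [hs]; simp)
    have hu : u ∈ fo.π := by rw [hs]; exact List.mem_append_right s (List.mem_cons_self)
    have hpu : A (fo.par u) u ≠ 0 := fo.par_edge u hu
    have hus : u ∉ s := by
      have hnd := fo.nodup; rw [hs] at hnd
      exact fun hh => List.disjoint_of_nodup_append hnd hh (List.mem_cons_self)
    set x₀ : Fin n → F := s.foldl (forcingStep A fo.par c) 0 with hx₀
    have hfold : (s ++ [u]).foldl (forcingStep A fo.par c) 0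
        = forcingStep A fo.par c x₀ u := by
      rw [List.foldl_append, List.foldl_cons, List.foldl_nil]
    intro w
    rw [hfold]
    by_cases hwu : w = u
    · rw [hwu]
      simp only [forcingStep, Function.update_self, List.mem_append, List.mem_singleton,
        or_true, if_true]
      set p := fo.par u with hp
      have hkey : c p - A p ⬝ᵥ x₀ = A p u * x'' u := by
        have : c p - A p ⬝ᵥ x₀ = ∑ v, (A p v * x'' v - A p v * x₀ v) := by
          rw [Finset.sum_sub_distrib, hc]; rfl
        rw [this, Finset.sum_eq_single u]
        · rw [hinv u, if_neg hus, mul_zero, sub_zero]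
        · intro v _ hvu
          rw [hinv v]
          by_cases hvs : v ∈ s
          · rw [if_pos hvs, sub_self]
          · rw [if_neg hvs, mul_zero, sub_zero]
            by_cases hvπ : v ∈ fo.π
            · have hvt : v ∈ t := by
                rw [hs] at hvπ
                rcases List.mem_append.mp hvπ with h1 | h1
                · exact absurd h1 hvs
                · rcases List.mem_cons.mp h1 with h2 | h2
                  · exact absurd h2 hvu
                  · exact h2
              rw [tail_coef_zero A fo hs hvt, zero_mul]
            · rw [hx v hvπ, mul_zero]
        · intro hh; exact absurd (Finset.mem_univ u) hh
      rw [hkey, mul_div_cancel_left₀ _ hpu]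
    · rw [show forcingStep A fo.par c x₀ u w = x₀ w from
        Function.update_of_ne hwu _ _, hinv w]
      have : (w ∈ s ++ [u]) ↔ (w ∈ s) := by simp [hwu]
      by_cases hws : w ∈ s
      · rw [if_pos hws, if_pos (this.mpr hws)]
      · rw [if_neg hws, if_neg (fun hh => hws (this.mp hh))]

lemma core_eval (fo : ForcingOrder A Z) (x : Fin n → F) (t : {v // IsTerminal fo v}) :
    Rmap A fo (A.mulVec x) t.1 = (coreMatrix A fo).mulVec (fun z => x z.1) t := by
  set L : (Fin n → F) →ₗ[F] (Fin n → F) := (RmapL A fo).comp A.mulVecLin with hL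
  have hLapp : ∀ y : Fin n → F, L y = Rmap A fo (A.mulVec y) := fun y => rfl
  set xZ : Fin n → F := fun i => if i ∈ Z then x i else 0 with hxZ
  set xP : Fin n → F := fun i => if i ∈ Z then 0 else x i with hxP
  have hsplit : x = xZ + xP := by
    funext i
    by_cases hi : i ∈ Z <;> simp [hxZ, hxP, hi]
  have hP : L xP = 0 := by
    rw [hLapp, Rmap, forcing_fix A fo xP
      (fun v hv => by simp [hxP, not_not.mp (fun h => hv ((fo.mem_iff v).2 h))]),
      sub_self]
  have hxZsum : xZ = ∑ z ∈ Z, x z • (Pi.single z 1 : Fin n → F) := by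
    funext i
    simp only [Finset.sum_apply, Pi.smul_apply, Pi.single_apply, smul_eq_mul,
      mul_ite, mul_one, mul_zero, hxZ]
    exact (Finset.sum_ite_eq Z i x).symm
  have hL1 : L x = ∑ z ∈ Z, x z • L (Pi.single z 1) := by
    conv_lhs => rw [hsplit]
    rw [map_add, hP, add_zero, hxZsum, map_sum]
    simp only [_root_.map_smul]
  have hcol : ∀ z : Fin n, A.mulVec (Pi.single z 1) = fun i => A i z := by
    intro z; funext i
    simp [Matrix.mulVec, dotProduct, Pi.single_apply]
  calc Rmap A fo (A.mulVec x) t.1 = L x t.1 := rfl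
    _ = ∑ z ∈ Z, x z * Rmap A fo (fun i => A i z) t.1 := by
        rw [hL1]
        simp only [Finset.sum_apply, Pi.smul_apply, smul_eq_mul]
        refine Finset.sum_congr rfl fun z _ => ?_
        rw [hLapp, hcol z]
    _ = (coreMatrix A fo).mulVec (fun z => x z.1) t := by
        rw [Matrix.mulVec]
        unfold dotProduct
        rw [← Finset.sum_coe_sort Z (fun z => x z * Rmap A fo (fun i => A i z) t.1)]
        refine Finset.sum_congr rfl fun z _ => ?_
        simp [coreMatrix, mul_comm]

end Aux

/-- `A x = b` is solvable iff `B y = (R b)_T` is solvable; moreover,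
given such a `y`, the vector `x = x' + Forcing(A, Z, b − A x')`, where `x'` equals `y`
on `Z` and is zero elsewhere, satisfies `A x = b`. -/
theorem stmt12 {F : Type*} [Field F] {n : ℕ} (A : Matrix (Fin n) (Fin n) F)
    (Z : Finset (Fin n)) (hZ : IsZeroForcingSet (adjOf A) ↑Z)
    (fo : ForcingOrder A Z) (b : Fin n → F) :
    ((∃ x, A.mulVec x = b) ↔
      ∃ y : {v // v ∈ Z} → F,
        (coreMatrix A fo).mulVec y = fun t => Rmap A fo b t.1) ∧
    (∀ y : {v // v ∈ Z} → F,
      (coreMatrix A fo).mulVec y = (fun t => Rmap A fo b t.1) →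
      ∀ x' : Fin n → F, (x' = fun i => if h : i ∈ Z then y ⟨i, h⟩ else 0) →
        A.mulVec (x' + Forcing A fo (b - A.mulVec x')) = b) := by
  have key : ∀ y : {v // v ∈ Z} → F,
      (coreMatrix A fo).mulVec y = (fun t => Rmap A fo b t.1) →
      ∀ x' : Fin n → F, (x' = fun i => if h : i ∈ Z then y ⟨i, h⟩ else 0) →
        A.mulVec (x' + Forcing A fo (b - A.mulVec x')) = b := by
    intro y hy x' hx'
    set c : Fin n → F := b - A.mulVec x' with hc
    have hR : Rmap A fo c = 0 := by
      funext v
      by_cases hv : IsTerminal fo v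
      · have hsub : Rmap A fo c v = Rmap A fo b v - Rmap A fo (A.mulVec x') v := by
          have := map_sub (RmapL A fo) b (A.mulVec x')
          calc Rmap A fo c v = (RmapL A fo) (b - A.mulVec x') v := rfl
            _ = ((RmapL A fo) b - (RmapL A fo) (A.mulVec x')) v := by rw [this]
            _ = Rmap A fo b v - Rmap A fo (A.mulVec x') v := rfl
        have hcore := core_eval A fo x' ⟨v, hv⟩
        have hyx : (fun z : {v // v ∈ Z} => x' z.1) = y := by
          funext z; rw [hx']; exact dif_pos z.2
        rw [hsub, hcore, hyx, hy]
        simp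
      · rw [IsTerminal] at hv
        push_neg at hv
        obtain ⟨u, hu, hpu⟩ := hv
        rw [Pi.zero_apply, ← hpu]
        exact rmap_par_eq_zero A fo c hu
    have hA : A.mulVec (Forcing A fo c) = c := by
      have : Rmap A fo c = c - A.mulVec (Forcing A fo c) := rfl
      rw [this] at hR
      linear_combination (norm := abel) -hR
    rw [Matrix.mulVec_add, hA, hc]
    abel
  refine ⟨⟨?_, ?_⟩, key⟩
  · rintro ⟨x, hx⟩
    refine ⟨fun z => x z.1, ?_⟩
    funext t
    rw [← hx]
    exact (core_eval A fo x t).symm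
  · rintro ⟨y, hy⟩
    exact ⟨_, key y hy _ rfl⟩
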